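/- Let H = {h_1, h_2} and D = {d_1, d_2, d_3}, with fixed doctor preferences d_1 : h_1 ≻ h_2, d_2 : h_2 ≻ h_1, d_3 : h_1 ≻ h_2. There is no function f mapping every pair (v_1, v_2) of matroid rank valuations on 2^D to an allocation such that both: (a) for all inputs, f(v_1, v_2) is stable and maximizes hospital utilitarian welfare with respect to the input valuations; and (b) f is hospital-strategyproof, i.e., for every hospital h ∈ {1,2}, all matroid rank valuations v_1, v_2, and every matroid rank valuation v', letting Y be the output of f when v_h is replaced by v' (the other valuation unchanged), one has v_h(Y_h) ≤ v_h(f(v_1,v_2)_h). -/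
import Mathlib


open Finset

/-- A matroid rank function on subsets of a finite ground set. -/
def IsMRF {α : Type*} [DecidableEq α] (v : Finset α → ℤ) : Prop :=
  v ∅ = 0 ∧
  (∀ (S : Finset α) (d : α), d ∉ S →
    v (insert d S) - v S = 0 ∨ v (insert d S) - v S = 1) ∧
  (∀ (S T : Finset α) (d : α), S ⊆ T → d ∉ T →
    v (insert d T) - v T ≤ v (insert d S) - v S)

/-- The bundle of doctors assigned to hospital `h` under allocation `X`. -/
def bundle {n m : ℕ} (X : Fin m → Option (Fin n)) (h : Fin n) : Finset (Fin m) :=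
  Finset.univ.filter (fun d => X d = some h)

/-- An allocation is non-redundant if every hospital's bundle is independent. -/
def NonRedundant {n m : ℕ} (v : Fin n → Finset (Fin m) → ℤ)
    (X : Fin m → Option (Fin n)) : Prop :=
  ∀ h, v h (bundle X h) = (bundle X h).card

/-- Hospital utilitarian welfare. -/
def USW {n m : ℕ} (v : Fin n → Finset (Fin m) → ℤ) (X : Fin m → Option (Fin n)) : ℤ :=
  ∑ h, v h (bundle X h)

/-- Doctor `d` strictly prefers the first outcome to the second; every hospital is
strictly preferred to being unallocated (`none`). -/
def OptStrictPref {n m : ℕ} (P : Fin m → Fin n → Fin n → Prop) (d : Fin m) :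
    Option (Fin n) → Option (Fin n) → Prop
  | some h, some h' => P d h h'
  | some _, none => True
  | none, _ => False

/-- `(h, S)` is a blocking pair for `X`. -/
def IsBlockingPair {n m : ℕ} (v : Fin n → Finset (Fin m) → ℤ)
    (P : Fin m → Fin n → Fin n → Prop) (X : Fin m → Option (Fin n))
    (h : Fin n) (S : Finset (Fin m)) : Prop :=
  v h S = S.card ∧ v h (bundle X h) < v h S ∧
    ∀ d ∈ S, X d = some h ∨ OptStrictPref P d (some h) (X d)

/-- An allocation is stable if it is non-redundant and admits no blocking pair. -/
def Stable {n m : ℕ} (v : Fin n → Finset (Fin m) → ℤ)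
    (P : Fin m → Fin n → Fin n → Prop) (X : Fin m → Option (Fin n)) : Prop :=
  NonRedundant v X ∧ ¬ ∃ h S, IsBlockingPair v P X h S

/-- The fixed doctor preferences of Example 2.7: doctors `0` and `2` prefer hospital `0`
to hospital `1`, doctor `1` prefers hospital `1` to hospital `0`. -/
def exPref (d : Fin 3) (h h' : Fin 2) : Prop :=
  (if d = 1 then h' else h) < (if d = 1 then h else h')


/-! ### Auxiliary material for the proof -/

instance decExPref (d : Fin 3) (h h' : Fin 2) : Decidable (exPref d h h') :=
  decidable_of_iff ((if d = 1 then h' else h) < (if d = 1 then h else h')) Iff.rfl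

instance decOSP (d : Fin 3) (o o' : Option (Fin 2)) :
    Decidable (OptStrictPref exPref d o o') :=
  match o, o' with
  | some h, some h' => inferInstanceAs (Decidable (exPref d h h'))
  | some _, none => .isTrue trivial
  | none, some _ => .isFalse id
  | none, none => .isFalse id

instance decMRF (v : Finset (Fin 3) → ℤ) : Decidable (IsMRF v) := by
  unfold IsMRF; infer_instance

instance decStable (v : Fin 2 → Finset (Fin 3) → ℤ) (X : Fin 3 → Option (Fin 2)) :
    Decidable (Stable v exPref X) := by
  unfold Stable NonRedundant IsBlockingPair; infer_instance

/-- Hospital 0's true valuation: doctors 0 and 2 are parallel, rank 2. -/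
def w0 : Finset (Fin 3) → ℤ := fun S =>
  ((S.image fun d => if d = 2 then (0 : Fin 3) else d).card : ℤ)

/-- Hospital 1's true valuation: doctors 0 and 1 are parallel, rank 2. -/
def w1 : Finset (Fin 3) → ℤ := fun S =>
  ((S.image fun d => if d = 1 then (0 : Fin 3) else d).card : ℤ)

/-- The manipulation valuation: doctor 0 is a loop, doctors 1 and 2 are free. -/
def wdev : Finset (Fin 3) → ℤ := fun S => ((S.erase 0).card : ℤ)

def vA : Fin 2 → Finset (Fin 3) → ℤ := fun h => if h = 0 then w0 else w1
def vB0 : Fin 2 → Finset (Fin 3) → ℤ := fun h => if h = 0 then wdev else w1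
def vB1 : Fin 2 → Finset (Fin 3) → ℤ := fun h => if h = 0 then w0 else wdev

def X1 : Fin 3 → Option (Fin 2) := fun d => if d = 0 then some 0 else some 1
def X2 : Fin 3 → Option (Fin 2) := fun d => if d = 0 then some 1 else some 0

lemma updA0 : Function.update vA 0 wdev = vB0 := by
  funext h
  fin_cases h <;> simp [Function.update, vA, vB0]

lemma updA1 : Function.update vA 1 wdev = vB1 := by
  funext h
  fin_cases h <;> simp [Function.update, vA, vB1]

lemma mrfA : ∀ h, IsMRF (vA h) := by decide
lemma mrfB0 : ∀ h, IsMRF (vB0 h) := by decide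
lemma mrfB1 : ∀ h, IsMRF (vB1 h) := by decide
lemma mrfdev : IsMRF wdev := by decide

lemma uniqA : ∀ X : Fin 3 → Option (Fin 2),
    (Stable vA exPref X ∧ ∀ Y : Fin 3 → Option (Fin 2), USW vA Y ≤ USW vA X) →
    X = X1 ∨ X = X2 := by decide

lemma uniqB0 : ∀ X : Fin 3 → Option (Fin 2),
    (Stable vB0 exPref X ∧ ∀ Y : Fin 3 → Option (Fin 2), USW vB0 Y ≤ USW vB0 X) →
    X = X2 := by decide

lemma uniqB1 : ∀ X : Fin 3 → Option (Fin 2),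
    (Stable vB1 exPref X ∧ ∀ Y : Fin 3 → Option (Fin 2), USW vB1 Y ≤ USW vB1 X) →
    X = X1 := by decide

/-- Example 2.7: with two hospitals, three doctors, and the fixed preferences `exPref`,
no mechanism that always outputs a stable, hospital-USW-maximizing allocation can be
hospital-strategyproof. -/
theorem no_sp_usw_mechanism :
    ¬ ∃ f : (Fin 2 → Finset (Fin 3) → ℤ) → (Fin 3 → Option (Fin 2)),
      (∀ v : Fin 2 → Finset (Fin 3) → ℤ, (∀ h, IsMRF (v h)) →
        Stable v exPref (f v) ∧ ∀ Y : Fin 3 → Option (Fin 2), USW v Y ≤ USW v (f v)) ∧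
      (∀ (v : Fin 2 → Finset (Fin 3) → ℤ) (h : Fin 2) (v' : Finset (Fin 3) → ℤ),
        (∀ g, IsMRF (v g)) → IsMRF v' →
        v h (bundle (f (Function.update v h v')) h) ≤ v h (bundle (f v) h)) := by
  rintro ⟨f, hq, hsp⟩
  have hA := hq vA mrfA
  rcases uniqA (f vA) hA with h1 | h2
  · have hY := uniqB0 (f vB0) (hq vB0 mrfB0)
    have hle := hsp vA 0 wdev mrfA mrfdev
    rw [updA0, hY, h1] at hle
    revert hle; decide
  · have hY := uniqB1 (f vB1) (hq vB1 mrfB1)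
    have hle := hsp vA 1 wdev mrfA mrfdev
    rw [updA1, hY, h2] at hle
    revert hle; decide
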